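/- For all integers h ≥ h₀ (some explicit threshold, e.g., h ≥ 20), the geometric-budget worst-case error (2^{(h+1)/3}−1)³/(2^{1/3}−1)³ is strictly smaller than the uniform-budget worst-case error (h+1)²(2^{h+1}−1). Moreover the ratio of geometric to uniform error tends to 0 as h → ∞. -/
import Mathlib


open Real Filter

/-- Worst-case error of the optimal geometric budget (up to the common factor `16/ε²`). -/
noncomputable def ErrGeom (h : ℕ) : ℝ :=
  ((2 : ℝ) ^ (((h : ℝ) + 1) / 3) - 1) ^ 3 / ((2 : ℝ) ^ ((1 : ℝ) / 3) - 1) ^ 3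

/-- Worst-case error of the uniform budget (up to the common factor `16/ε²`). -/
noncomputable def ErrUnif (h : ℕ) : ℝ :=
  ((h : ℝ) + 1) ^ 2 * (2 ^ (h + 1) - 1)

lemma cube_t : ((2:ℝ) ^ ((1:ℝ)/3)) ^ 3 = 2 := by
  rw [← Real.rpow_natCast ((2:ℝ) ^ ((1:ℝ)/3)) 3, ← Real.rpow_mul (by norm_num)]
  norm_num

lemma t_ge : (5:ℝ)/4 ≤ (2:ℝ) ^ ((1:ℝ)/3) := by
  by_contra hlt
  push_neg at hlt
  have h0 : (0:ℝ) ≤ (2:ℝ) ^ ((1:ℝ)/3) := Real.rpow_nonneg (by norm_num) _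
  have := pow_lt_pow_left₀ hlt h0 (n := 3) (by norm_num)
  rw [cube_t] at this
  norm_num at this

lemma c_ge : (1:ℝ)/64 ≤ ((2:ℝ) ^ ((1:ℝ)/3) - 1) ^ 3 := by
  have h := t_ge
  calc (1:ℝ)/64 = (1/4)^3 := by norm_num
  _ ≤ ((2:ℝ) ^ ((1:ℝ)/3) - 1) ^ 3 := pow_le_pow_left₀ (by norm_num) (by linarith) 3

lemma cubeA (h : ℕ) : ((2:ℝ) ^ (((h:ℝ)+1)/3)) ^ 3 = 2 ^ (h+1) := by
  rw [← Real.rpow_natCast ((2:ℝ) ^ (((h:ℝ)+1)/3)) 3, ← Real.rpow_mul (by norm_num)]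
  rw [show ((h:ℝ)+1)/3 * (3:ℕ) = ((h+1 : ℕ) : ℝ) by push_cast; ring]
  exact Real.rpow_natCast 2 (h+1)

lemma ErrGeom_le (h : ℕ) : ErrGeom h ≤ 64 * 2 ^ (h+1) := by
  have hA1 : (1:ℝ) ≤ (2:ℝ) ^ (((h:ℝ)+1)/3) :=
    Real.one_le_rpow (by norm_num) (by positivity)
  have hAle : ((2:ℝ) ^ (((h:ℝ)+1)/3) - 1) ^ 3 ≤ 2 ^ (h+1) := by
    rw [← cubeA h]
    have : (0:ℝ) ≤ (2:ℝ) ^ (((h:ℝ)+1)/3) - 1 := by linarith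
    nlinarith
  have hc := c_ge
  have hAnn : (0:ℝ) ≤ ((2:ℝ) ^ (((h:ℝ)+1)/3) - 1) ^ 3 := pow_nonneg (by linarith) 3
  have h2 : (0:ℝ) < 2 ^ (h+1) := by positivity
  calc ErrGeom h ≤ (2 ^ (h+1) : ℝ) / (1/64) := by
        apply div_le_div₀ (le_of_lt h2) hAle (by norm_num) hc
    _ = 64 * 2 ^ (h+1) := by ring

lemma ErrGeom_nonneg (h : ℕ) : 0 ≤ ErrGeom h := by
  have hA1 : (1:ℝ) ≤ (2:ℝ) ^ (((h:ℝ)+1)/3) :=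
    Real.one_le_rpow (by norm_num) (by positivity)
  have hc := c_ge
  apply div_nonneg (pow_nonneg (by linarith) 3) (by nlinarith)

lemma unif_pos (h : ℕ) : 0 < ErrUnif h := by
  unfold ErrUnif
  have h2 : (2:ℝ) ≤ 2 ^ (h+1) := by
    calc (2:ℝ) = 2^1 := by norm_num
    _ ≤ 2 ^ (h+1) := pow_le_pow_right₀ (by norm_num) (by omega)
  have h1 : (0:ℝ) < 2 ^ (h+1) - 1 := by linarith
  exact mul_pos (by positivity) h1

/-- For all `h ≥ 20` the geometric-budget worst-case error is strictly smaller than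
the uniform-budget worst-case error, and the ratio of geometric to uniform error
tends to `0` as `h → ∞`. -/
theorem geometric_beats_uniform :
    (∀ h : ℕ, 20 ≤ h → ErrGeom h < ErrUnif h) ∧
    Tendsto (fun h : ℕ => ErrGeom h / ErrUnif h) atTop (nhds 0) := by
  have h2pow : ∀ h : ℕ, (2:ℝ) ≤ 2 ^ (h+1) := fun h => by
    calc (2:ℝ) = 2^1 := by norm_num
    _ ≤ 2 ^ (h+1) := pow_le_pow_right₀ (by norm_num) (by omega)
  constructor
  · intro h hh
    have hX := h2pow h
    have hB := ErrGeom_le h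
    have hhr : (20:ℝ) ≤ (h:ℝ) := by exact_mod_cast hh
    have hsq : (441:ℝ) ≤ ((h:ℝ)+1)^2 := by nlinarith
    have hmul : (441:ℝ)*(2^(h+1)-1) ≤ ((h:ℝ)+1)^2*(2^(h+1)-1) :=
      mul_le_mul_of_nonneg_right hsq (by linarith)
    have : (64:ℝ) * 2 ^ (h+1) < ErrUnif h := by
      unfold ErrUnif
      linarith
    linarith
  · apply squeeze_zero (fun h => div_nonneg (ErrGeom_nonneg h) (unif_pos h).le)
      (g := fun h : ℕ => 128 / ((h:ℝ)+1))
    · intro h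
      rw [div_le_div_iff₀ (unif_pos h) (by positivity)]
      have hX := h2pow h
      have hB := ErrGeom_le h
      have hGnn := ErrGeom_nonneg h
      have hh1 : (1:ℝ) ≤ (h:ℝ)+1 := by linarith [Nat.cast_nonneg (α := ℝ) h]
      unfold ErrUnif
      nlinarith [mul_le_mul_of_nonneg_right hB (by linarith : (0:ℝ) ≤ (h:ℝ)+1),
        mul_le_mul_of_nonneg_left hX (by nlinarith : (0:ℝ) ≤ 64*((h:ℝ)+1))]
    · apply Tendsto.div_atTop tendsto_const_nhds
      exact tendsto_atTop_add_const_right _ 1 tendsto_natCast_atTop_atTop
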